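/- Let m, p be natural numbers, Q₁ a real m×m matrix, Q₂ a real m×p matrix, and Q₄ a real p×p matrix with Q₄ invertible. Let i, j ∈ Fin m with i ≠ j and set W' := (e_i - e_j)(e_i - e_j)ᵀ ∈ ℝ^{m×m}. Then for every τ ∈ ℝ the Kron reduction of the perturbed block matrix [[Q₁ + τ • W', Q₂],[Q₂ᵀ, Q₄]] equals Q_red + τ • W', where Q_red = Q₁ - Q₂ Q₄⁻¹ Q₂ᵀ. Moreover, if λ : ℝ → ℝ and u : ℝ → ℝ^m are differentiable at 0 with (Q_red + τ • W') *ᵥ u(τ) = λ(τ) • u(τ) for all τ, and v ∈ ℝ^m satisfies vᵀ * Q_red = λ(0) • vᵀ and v ⬝ᵥ u(0) = 1, then λ'(0) = v ⬝ᵥ (W' *ᵥ u(0)) = (v i - v j) * (u(0) i - u(0) j). -/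

import Mathlib

open Matrix

private lemma dot_vecMulVec_mulVec {m : ℕ} (v a b x : Fin m → ℝ) :
    v ⬝ᵥ (vecMulVec a b *ᵥ x) = (v ⬝ᵥ a) * (b ⬝ᵥ x) := by
  simp only [vecMulVec, mulVec, dotProduct, Matrix.of_apply, Finset.mul_sum, Finset.sum_mul,
    mul_assoc]
  rw [Finset.sum_comm]

/-- Lemma 2 of the paper (susceptance perturbation `B_ij` between two converter nodes `i`
and `j`): the Kron reduction of the perturbed block matrix
`[[Q₁ + τ W', Q₂],[Q₂ᵀ, Q₄]]` equals `Q_red + τ W'` for `W' = (e_i-e_j)(e_i-e_j)ᵀ`, and the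
eigenvalue sensitivity is `λ'(0) = vᵀ W' u(0) = (v i - v j)(u(0) i - u(0) j)`. -/
theorem lemma2_converter_nodes_sensitivity {m p : ℕ}
    (Q1 : Matrix (Fin m) (Fin m) ℝ) (Q2 : Matrix (Fin m) (Fin p) ℝ)
    (Q4 : Matrix (Fin p) (Fin p) ℝ) (hQ4 : IsUnit Q4.det)
    (i j : Fin m) (hij : i ≠ j)
    (W' : Matrix (Fin m) (Fin m) ℝ)
    (hW' : W' = vecMulVec (Pi.single i 1 - Pi.single j 1) (Pi.single i 1 - Pi.single j 1))
    (Qred : Matrix (Fin m) (Fin m) ℝ) (hQred : Qred = Q1 - Q2 * Q4⁻¹ * Q2ᵀ)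
    (lam : ℝ → ℝ) (u : ℝ → (Fin m → ℝ))
    (hlam : DifferentiableAt ℝ lam 0) (hu : DifferentiableAt ℝ u 0)
    (heig : ∀ τ : ℝ, (Qred + τ • W') *ᵥ u τ = lam τ • u τ)
    (v : Fin m → ℝ)
    (hv : v ᵥ* Qred = lam 0 • v)
    (hnorm : v ⬝ᵥ u 0 = 1) :
    (∀ τ : ℝ, (Q1 + τ • W') - Q2 * Q4⁻¹ * Q2ᵀ = Qred + τ • W') ∧
      deriv lam 0 = v ⬝ᵥ (W' *ᵥ u 0) ∧
      deriv lam 0 = (v i - v j) * (u 0 i - u 0 j) := by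
  -- derivative of u
  set u' : Fin m → ℝ := deriv u 0 with hu'
  have hud : HasDerivAt u u' 0 := hu.hasDerivAt
  have hcomp : ∀ k, HasDerivAt (fun τ => u τ k) (u' k) 0 :=
    fun k => hasDerivAt_pi.mp hud k
  -- dot products with u are differentiable
  have hdot : ∀ w : Fin m → ℝ, HasDerivAt (fun τ => w ⬝ᵥ u τ) (w ⬝ᵥ u') 0 := by
    intro w
    simp only [dotProduct]
    exact HasDerivAt.fun_sum fun k _ => (hcomp k).const_mul (w k)
  set w : Fin m → ℝ := v ᵥ* W' with hw
  -- key scalar identity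
  have key : ∀ τ : ℝ, lam τ * (v ⬝ᵥ u τ) = lam 0 * (v ⬝ᵥ u τ) + τ * (w ⬝ᵥ u τ) := by
    intro τ
    have h1 : v ⬝ᵥ ((Qred + τ • W') *ᵥ u τ) = lam τ * (v ⬝ᵥ u τ) := by
      rw [heig τ, dotProduct_smul, smul_eq_mul]
    have h2 : v ⬝ᵥ ((Qred + τ • W') *ᵥ u τ)
        = lam 0 * (v ⬝ᵥ u τ) + τ * (w ⬝ᵥ u τ) := by
      rw [add_mulVec, dotProduct_add, smul_mulVec, dotProduct_smul,
        dotProduct_mulVec, hv, smul_dotProduct, ← dotProduct_mulVec, smul_eq_mul,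
        smul_eq_mul]
    rw [← h1, h2]
  -- differentiate both sides
  have hφ : HasDerivAt (fun τ => v ⬝ᵥ u τ) (v ⬝ᵥ u') 0 := hdot v
  have hψ : HasDerivAt (fun τ => w ⬝ᵥ u τ) (w ⬝ᵥ u') 0 := hdot w
  have hL : HasDerivAt (fun τ => lam τ * (v ⬝ᵥ u τ))
      (deriv lam 0 * (v ⬝ᵥ u 0) + lam 0 * (v ⬝ᵥ u')) 0 := hlam.hasDerivAt.mul hφ
  have hR : HasDerivAt (fun τ => lam 0 * (v ⬝ᵥ u τ) + τ * (w ⬝ᵥ u τ))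
      (lam 0 * (v ⬝ᵥ u') + (1 * (w ⬝ᵥ u 0) + 0 * (w ⬝ᵥ u'))) 0 := by
    exact (hφ.const_mul (lam 0)).add ((hasDerivAt_id 0).mul hψ)
  have hLR : (fun τ => lam τ * (v ⬝ᵥ u τ))
      = fun τ => lam 0 * (v ⬝ᵥ u τ) + τ * (w ⬝ᵥ u τ) := funext key
  rw [hLR] at hL
  have heq := hL.unique hR
  have hderiv : deriv lam 0 = w ⬝ᵥ u 0 := by
    rw [hnorm] at heq
    linarith
  have hd2 : deriv lam 0 = v ⬝ᵥ (W' *ᵥ u 0) := by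
    rw [hderiv, hw, dotProduct_mulVec]
  refine ⟨fun τ => by rw [hQred, add_sub_right_comm], hd2, ?_⟩
  rw [hd2, hW', dot_vecMulVec_mulVec]
  congr 1 <;> simp [dotProduct_sub, sub_dotProduct, dotProduct_single, single_dotProduct]
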